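/- arXiv:1702.07815 — 2 statements merged into one kernel-verified Lean document; each statement's English description precedes it below -/
import Mathlib

section
/- Let G be a directed graph with real arc lengths and no negative cycle, with unique shortest paths between every pair of vertices. Let S be a generic, independent set of weighted sites. For each site s ∈ S and every vertex x in the graphic Voronoi cell of s, every vertex on the shortest path from s to x also lies in the graphic Voronoi cell of s. -/
inductive DWalk {V : Type*} (A : V → V → Prop) : V → V → Type _ where
  | nil : (v : V) → DWalk A v v
  | cons : {u v w : V} → A u v → DWalk A v w → DWalk A u w

def DWalk.len {V : Type*} {A : V → V → Prop} (f : V → V → ℝ) :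
    ∀ {u w : V}, DWalk A u w → ℝ
  | _, _, .nil _ => 0
  | u, _, .cons (v := v) _ p => f u v + DWalk.len f p

def DWalk.support {V : Type*} {A : V → V → Prop} :
    ∀ {u w : V}, DWalk A u w → List V
  | u, _, .nil _ => [u]
  | u, _, .cons _ p => u :: DWalk.support p

def DWalk.lastArc {V : Type*} {A : V → V → Prop} :
    ∀ {u w : V}, DWalk A u w → Option (V × V)
  | _, _, .nil _ => none
  | u, _, .cons (v := v) _ p =>
      match DWalk.lastArc p with
      | none => some (u, v)
      | some pr => some pr

/-- Shortest-path distance: infimum of lengths of walks. -/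
noncomputable def ddist {V : Type*} (A : V → V → Prop) (f : V → V → ℝ) (s t : V) : ℝ :=
  sInf {x : ℝ | ∃ p : DWalk A s t, DWalk.len f p = x}


/-- The graphic Voronoi cell of a weighted site `s` with respect to a set of
weighted sites `S`. -/
def vorCell {V : Type*} (A : V → V → Prop) (f : V → V → ℝ)
    (S : Finset (V × ℝ)) (s : V × ℝ) : Set V :=
  {x | ∀ t ∈ S, t ≠ s → s.2 + ddist A f s.1 x ≤ t.2 + ddist A f t.1 x}


namespace DWalk

variable {V : Type*} {A : V → V → Prop}

def copy {u w u' w' : V} (p : DWalk A u w) (hu : u = u') (hw : w = w') :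
    DWalk A u' w' := hu ▸ hw ▸ p

@[simp] lemma len_copy (f : V → V → ℝ) {u w u' w' : V} (p : DWalk A u w)
    (hu : u = u') (hw : w = w') : (p.copy hu hw).len f = p.len f := by
  subst hu; subst hw; rfl

@[simp] lemma support_copy {u w u' w' : V} (p : DWalk A u w)
    (hu : u = u') (hw : w = w') : (p.copy hu hw).support = p.support := by
  subst hu; subst hw; rfl

lemma mem_support_nil {v y : V} (h : y ∈ (DWalk.nil (A := A) v).support) :
    y = v := by simpa [DWalk.support] using h

def append : ∀ {u v w : V}, DWalk A u v → DWalk A v w → DWalk A u w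
  | _, _, _, .nil _, q => q
  | _, _, _, .cons a p, q => .cons a (p.append q)

lemma len_append (f : V → V → ℝ) :
    ∀ {u v w : V} (p : DWalk A u v) (q : DWalk A v w),
      (p.append q).len f = p.len f + q.len f
  | _, _, _, .nil _, q => by simp [append, len]
  | _, _, _, .cons a p, q => by
      simp [append, len, len_append f p q]; ring

variable [DecidableEq V]

def takeUntil : ∀ {u w : V} (p : DWalk A u w) (y : V), y ∈ p.support → DWalk A u y
  | _, _, .nil v, _, h => (DWalk.nil v).copy rfl (mem_support_nil h).symm
  | u, _, .cons a q, y, h =>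
      if hy : u = y then (DWalk.nil u).copy rfl hy
      else .cons a (q.takeUntil y
        ((List.mem_cons.mp h).resolve_left (fun h' => hy h'.symm)))

def dropUntil : ∀ {u w : V} (p : DWalk A u w) (y : V), y ∈ p.support → DWalk A y w
  | _, _, .nil v, _, h => (DWalk.nil v).copy (mem_support_nil h).symm rfl
  | u, _, .cons a q, y, h =>
      if hy : u = y then (DWalk.cons a q).copy hy rfl
      else q.dropUntil y ((List.mem_cons.mp h).resolve_left (fun h' => hy h'.symm))

lemma len_takeUntil_add_dropUntil (f : V → V → ℝ) :
    ∀ {u w : V} (p : DWalk A u w) (y : V) (h : y ∈ p.support),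
      (p.takeUntil y h).len f + (p.dropUntil y h).len f = p.len f
  | _, _, .nil v, y, h => by simp [takeUntil, dropUntil, len]
  | u, _, .cons a q, y, h => by
      by_cases hy : u = y
      · simp [takeUntil, dropUntil, hy, len]
      · simp only [takeUntil, dropUntil, dif_neg hy, len]
        rw [add_assoc, len_takeUntil_add_dropUntil f q y _]

lemma support_dropUntil_suffix :
    ∀ {u w : V} (p : DWalk A u w) (y : V) (h : y ∈ p.support),
      (p.dropUntil y h).support <:+ p.support
  | _, _, .nil v, y, h => by simp [dropUntil]
  | u, _, .cons a q, y, h => by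
      by_cases hy : u = y
      · simp [dropUntil, hy]
      · simp only [dropUntil, dif_neg hy]
        exact (support_dropUntil_suffix q y _).trans ⟨[u], rfl⟩

def bypass : ∀ {u w : V}, DWalk A u w → DWalk A u w
  | _, _, .nil v => .nil v
  | _, _, .cons a q =>
      let q' := q.bypass
      if h : _ ∈ q'.support then q'.dropUntil _ h
      else .cons a q'

lemma support_bypass_nodup : ∀ {u w : V} (p : DWalk A u w), p.bypass.support.Nodup
  | _, _, .nil v => by simp [bypass, support]
  | u, _, .cons a q => by
      by_cases h : u ∈ q.bypass.support
      · simp only [bypass, dif_pos h]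
        exact (support_bypass_nodup q).sublist (support_dropUntil_suffix _ _ _).sublist
      · simp only [bypass, dif_neg h, support, List.nodup_cons]
        exact ⟨h, support_bypass_nodup q⟩

lemma len_bypass_le (lam : V → V → ℝ)
    (hNoNeg : ∀ (v : V) (c : DWalk A v v), 0 ≤ DWalk.len lam c) :
    ∀ {u w : V} (p : DWalk A u w), p.bypass.len lam ≤ p.len lam
  | _, _, .nil v => le_refl _
  | u, _, .cons (v := v) a q => by
      have ih := len_bypass_le lam hNoNeg q
      by_cases h : u ∈ q.bypass.support
      · simp only [bypass, dif_pos h, len]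
        have hcyc := hNoNeg u (DWalk.cons a (q.bypass.takeUntil u h))
        simp only [len] at hcyc
        have hsplit := len_takeUntil_add_dropUntil lam q.bypass u h
        linarith
      · simp only [bypass, dif_neg h, len]
        linarith

lemma len_ge_of_lb (lam : V → V → ℝ) (m : ℝ) (hm0 : m ≤ 0)
    (hml : ∀ u v : V, m ≤ lam u v) :
    ∀ {u w : V} (p : DWalk A u w), (p.support.length : ℝ) * m ≤ p.len lam
  | _, _, .nil v => by simp [support, len]; linarith
  | u, _, .cons (v := v) a q => by
      have ih := len_ge_of_lb lam m hm0 hml q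
      have := hml u v
      simp only [support, len, List.length_cons]
      push_cast
      nlinarith

end DWalk

section ddist_lemmas

variable {V : Type*} [Fintype V] (A : V → V → Prop) (lam : V → V → ℝ)

lemma exists_lb : ∃ m : ℝ, m ≤ 0 ∧ ∀ u v : V, m ≤ lam u v := by
  classical
  set s : Finset ℝ :=
    insert 0 ((Finset.univ : Finset (V × V)).image fun p => lam p.1 p.2) with hs
  have hne : s.Nonempty := ⟨0, by simp [hs]⟩
  refine ⟨s.min' hne, Finset.min'_le _ _ (by simp [hs]), fun u v => ?_⟩
  exact Finset.min'_le _ _ (by simp [hs])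

lemma ddist_le {a b : V}
    (hNoNeg : ∀ (v : V) (c : DWalk A v v), 0 ≤ DWalk.len lam c)
    (p : DWalk A a b) : ddist A lam a b ≤ DWalk.len lam p := by
  classical
  obtain ⟨m, hm0, hml⟩ := exists_lb lam
  refine csInf_le ⟨(Fintype.card V : ℝ) * m, ?_⟩ ⟨p, rfl⟩
  rintro x ⟨q, rfl⟩
  have h1 : q.bypass.len lam ≤ q.len lam := DWalk.len_bypass_le lam hNoNeg q
  have h2 : ((q.bypass.support.length : ℝ)) * m ≤ q.bypass.len lam :=
    DWalk.len_ge_of_lb lam m hm0 hml _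
  have h3 : q.bypass.support.length ≤ Fintype.card V :=
    (DWalk.support_bypass_nodup q).length_le_card
  have h4 : (Fintype.card V : ℝ) * m ≤ (q.bypass.support.length : ℝ) * m := by
    apply mul_le_mul_of_nonpos_right _ hm0
    exact_mod_cast h3
  linarith

lemma ddist_triangle {a b c : V}
    (hNoNeg : ∀ (v : V) (c : DWalk A v v), 0 ≤ DWalk.len lam c)
    (huniq : ∀ a b : V, ∃! p : {q : DWalk A a b // (DWalk.support q).Nodup},
      DWalk.len lam p.1 = ddist A lam a b) :
    ddist A lam a c ≤ ddist A lam a b + ddist A lam b c := by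
  obtain ⟨⟨q1, _⟩, hq1, -⟩ := huniq a b
  obtain ⟨⟨q2, _⟩, hq2, -⟩ := huniq b c
  have := ddist_le A lam hNoNeg (q1.append q2)
  rwa [DWalk.len_append, hq1, hq2] at this

end ddist_lemmas

/-- for a generic, independent set of sites, every vertex on the
(unique) shortest path from a site to a vertex of its cell lies in the cell. -/
theorem stmt5 {V : Type*} [Fintype V] (A : V → V → Prop) (lam : V → V → ℝ)
    (hNoNeg : ∀ (v : V) (c : DWalk A v v), 0 ≤ DWalk.len lam c)
    (huniq : ∀ a b : V, ∃! p : {q : DWalk A a b // (DWalk.support q).Nodup},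
      DWalk.len lam p.1 = ddist A lam a b)
    (S : Finset (V × ℝ))
    (hgen : ∀ x : V, ∀ s ∈ S, ∀ t ∈ S, s ≠ t →
      s.2 + ddist A lam s.1 x ≠ t.2 + ddist A lam t.1 x)
    (hind : ∀ s ∈ S, (vorCell A lam S s).Nonempty)
    (s : V × ℝ) (hs : s ∈ S) (x : V) (hx : x ∈ vorCell A lam S s)
    (p : DWalk A s.1 x) (hp : (DWalk.support p).Nodup)
    (hlen : DWalk.len lam p = ddist A lam s.1 x) :
    ∀ y ∈ DWalk.support p, y ∈ vorCell A lam S s := by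
  classical
  intro y hy
  -- split p at y
  have hsplit := DWalk.len_takeUntil_add_dropUntil lam p y hy
  set q1 := p.takeUntil y hy with hq1
  set q2 := p.dropUntil y hy with hq2
  have h1 : ddist A lam s.1 y ≤ DWalk.len lam q1 := ddist_le A lam hNoNeg q1
  have h2 : ddist A lam y x ≤ DWalk.len lam q2 := ddist_le A lam hNoNeg q2
  have htri : ddist A lam s.1 x ≤ ddist A lam s.1 y + ddist A lam y x :=
    ddist_triangle A lam hNoNeg huniq
  have hkey : ddist A lam s.1 y + ddist A lam y x = ddist A lam s.1 x := by
    have : DWalk.len lam q1 + DWalk.len lam q2 = ddist A lam s.1 x := by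
      rw [hsplit, hlen]
    linarith
  intro t ht hts
  have hxt := hx t ht hts
  have htri2 : ddist A lam t.1 x ≤ ddist A lam t.1 y + ddist A lam y x :=
    ddist_triangle A lam hNoNeg huniq
  linarith
end

section
/- Let G, x₀, Y, λ and G⁺(Y) be as above with the condition λ(x₀,y) < λ(x₀,y') + d_G(y',y) for distinct y,y' ∈ Y, and assume the sites S_Y = {(y,λ(x₀,y)) : y ∈ Y} are generic. Then for any finite set U of vertices of G, the sum over u ∈ U of d_{G⁺(Y)}(x₀,u) equals the sum over y ∈ Y of ( λ(x₀,y)·|cell_G(s_y,S_Y) ∩ U| + sum over u ∈ cell_G(s_y,S_Y) ∩ U of d_G(y,u) ). -/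
/-- The arc relation of `G⁺(Y)`: the new vertex `x₀` is modelled as `none`,
the vertices of `G` as `some v`; arcs go from `x₀` to each `y ∈ Y`. -/
def Aplus {V : Type*} (A : V → V → Prop) (Y : Set V) :
    Option V → Option V → Prop
  | some u, some v => A u v
  | none, some y => y ∈ Y
  | _, _ => False

/-- Arc lengths in `G⁺(Y)`: `lamb y` on the new arc `(x₀, y)`. -/
def lamplus {V : Type*} (lam : V → V → ℝ) (lamb : V → ℝ) :
    Option V → Option V → ℝ
  | some u, some v => lam u v
  | none, some y => lamb y
  | _, _ => 0


/-- The graphic Voronoi cell of the site `s_y = (y, lamb y)` with respect to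
the sites `S_Y = {(y, lamb y) : y ∈ Y}`. -/
def cellY {V : Type*} (A : V → V → Prop) (lam : V → V → ℝ)
    (Y : Finset V) (lamb : V → ℝ) (y : V) : Set V :=
  {x | ∀ y' ∈ Y, y' ≠ y →
    lamb y + ddist A lam y x ≤ lamb y' + ddist A lam y' x}

/- ### Auxiliary lemmas -/

section Aux

variable {V : Type*} {A : V → V → Prop}

/-- Split a walk at a vertex of its support. -/
lemma DWalk.exists_split (f : V → V → ℝ) :
    ∀ {u w : V} (p : DWalk A u w) (x : V), x ∈ p.support →
      ∃ (q : DWalk A u x) (r : DWalk A x w),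
        q.len f + r.len f = p.len f ∧ r.support <:+ p.support := by
  intro u w p
  induction p with
  | nil v =>
      intro x hx
      simp only [DWalk.support, List.mem_singleton] at hx
      subst hx
      exact ⟨.nil _, .nil _, by simp [DWalk.len], by simp [DWalk.support]⟩
  | @cons u v w h p ih =>
      intro x hx
      simp only [DWalk.support, List.mem_cons] at hx
      rcases hx with rfl | hx
      · exact ⟨.nil _, .cons h p, by simp [DWalk.len], List.suffix_refl _⟩
      · obtain ⟨q, r, hlen, hsuf⟩ := ih x hx
        refine ⟨.cons h q, r, ?_, hsuf.trans (List.suffix_cons _ _)⟩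
        simp only [DWalk.len] at *
        linarith

/-- Every walk can be replaced by a walk with no repeated vertices, of no
greater length, provided there are no negative cycles. -/
lemma DWalk.exists_bypass {f : V → V → ℝ}
    (hNoNeg : ∀ (v : V) (c : DWalk A v v), 0 ≤ c.len f) :
    ∀ {u w : V} (p : DWalk A u w),
      ∃ q : DWalk A u w, q.support.Nodup ∧ q.len f ≤ p.len f := by
  intro u w p
  induction p with
  | nil v => exact ⟨.nil v, by simp [DWalk.support], le_refl _⟩
  | @cons u v w h p ih =>
      obtain ⟨q, hnd, hle⟩ := ih
      by_cases hu : u ∈ q.support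
      · obtain ⟨q₁, r, hlen, hsuf⟩ := q.exists_split f u hu
        refine ⟨r, hnd.sublist hsuf.sublist, ?_⟩
        have hcyc := hNoNeg u (.cons h q₁)
        simp only [DWalk.len] at hcyc ⊢
        linarith
      · refine ⟨.cons h q, by simp [DWalk.support, hnd, hu], ?_⟩
        simp only [DWalk.len]
        linarith

lemma DWalk.len_ge {f : V → V → ℝ} (M : ℝ) (hM : 0 ≤ M)
    (hf : ∀ a b, -M ≤ f a b) :
    ∀ {u w : V} (p : DWalk A u w), -(p.support.length : ℝ) * M ≤ p.len f := by
  intro u w p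
  induction p with
  | nil v => simp [DWalk.support, DWalk.len]; linarith
  | @cons u v w h p ih =>
      have := hf u v
      simp only [DWalk.support, DWalk.len, List.length_cons] at *
      push_cast
      linarith

/-- With no negative cycles on a finite vertex set, walk lengths are bounded
below. -/
lemma ddist_bddBelow [Fintype V] (A : V → V → Prop) (f : V → V → ℝ)
    (hNoNeg : ∀ (v : V) (c : DWalk A v v), 0 ≤ c.len f) (s t : V) :
    BddBelow {x : ℝ | ∃ p : DWalk A s t, DWalk.len f p = x} := by
  classical
  set M : ℝ := ∑ p : V × V, |f p.1 p.2| with hMdef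
  have hM : 0 ≤ M := Finset.sum_nonneg fun _ _ => abs_nonneg _
  have hf : ∀ a b, -M ≤ f a b := by
    intro a b
    have h1 : |f a b| ≤ M :=
      Finset.single_le_sum (f := fun p : V × V => |f p.1 p.2|)
        (fun _ _ => abs_nonneg _) (Finset.mem_univ (a, b))
    have h2 := neg_abs_le (f a b)
    linarith
  refine ⟨-(Fintype.card V : ℝ) * M, ?_⟩
  rintro x ⟨p, rfl⟩
  obtain ⟨q, hnd, hle⟩ := DWalk.exists_bypass hNoNeg p
  have h1 := DWalk.len_ge (A := A) M hM hf q
  have h2 : (q.support.length : ℝ) ≤ (Fintype.card V : ℝ) := by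
    exact_mod_cast hnd.length_le_card
  have h3 := mul_le_mul_of_nonneg_right h2 hM
  linarith

lemma ddist_le_len [Fintype V] {f : V → V → ℝ}
    (hNoNeg : ∀ (v : V) (c : DWalk A v v), 0 ≤ c.len f) {s t : V}
    (p : DWalk A s t) : ddist A f s t ≤ p.len f :=
  csInf_le (ddist_bddBelow A f hNoNeg s t) ⟨p, rfl⟩

/-- A walk in `G⁺(Y)` between two old vertices yields a walk in `G` of the
same length. -/
lemma exists_lower {Y : Set V} (lam : V → V → ℝ) (lamb : V → ℝ) :
    ∀ {o₁ o₂ : Option V} (p : DWalk (Aplus A Y) o₁ o₂) (a b : V),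
      o₁ = some a → o₂ = some b →
      ∃ q : DWalk A a b, q.len lam = p.len (lamplus lam lamb) := by
  intro o₁ o₂ p
  induction p with
  | nil v =>
      rintro a b rfl h2
      cases h2
      exact ⟨.nil a, rfl⟩
  | @cons u v w h p ih =>
      rintro a b rfl rfl
      rcases v with _ | c
      · exact absurd h (by simp [Aplus])
      · obtain ⟨q, hq⟩ := ih c b rfl rfl
        refine ⟨.cons h q, ?_⟩
        simp only [DWalk.len, lamplus, hq]

/-- A walk in `G` lifts to a walk in `G⁺(Y)` of the same length. -/
lemma exists_lift {Y : Set V} (lam : V → V → ℝ) (lamb : V → ℝ) :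
    ∀ {a b : V} (q : DWalk A a b),
      ∃ p : DWalk (Aplus A Y) (some a) (some b),
        p.len (lamplus lam lamb) = q.len lam := by
  intro a b q
  induction q with
  | nil v => exact ⟨.nil (some v), rfl⟩
  | @cons u v w h q ih =>
      obtain ⟨p, hp⟩ := ih
      refine ⟨.cons (show Aplus A Y (some u) (some v) from h) p, ?_⟩
      simp only [DWalk.len, lamplus, hp]

/-- No walk in `G⁺(Y)` ends at the new vertex, except the trivial one. -/
lemma to_none {Y : Set V} (lam : V → V → ℝ) (lamb : V → ℝ) :
    ∀ {o₁ o₂ : Option V} (p : DWalk (Aplus A Y) o₁ o₂), o₂ = none →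
      o₁ = none ∧ p.len (lamplus lam lamb) = 0 := by
  intro o₁ o₂ p
  induction p with
  | nil v => intro h; exact ⟨h, rfl⟩
  | @cons u v w h p ih =>
      intro hw
      obtain ⟨hv, -⟩ := ih hw
      subst hv
      rcases u with _ | a
      · exact absurd h (by simp [Aplus])
      · exact absurd h (by simp [Aplus])

/-- `G⁺(Y)` has no negative cycles either. -/
lemma noNeg_plus {Y : Set V} (lam : V → V → ℝ) (lamb : V → ℝ)
    (hNoNeg : ∀ (v : V) (c : DWalk A v v), 0 ≤ c.len lam) :
    ∀ (o : Option V) (c : DWalk (Aplus A Y) o o),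
      0 ≤ c.len (lamplus lam lamb) := by
  intro o c
  rcases o with _ | a
  · obtain ⟨-, h2⟩ := to_none lam lamb c rfl
    rw [h2]
  · obtain ⟨q, hq⟩ := exists_lower lam lamb c a a rfl rfl
    rw [← hq]
    exact hNoNeg a q

/-- A walk from the new vertex to an old vertex decomposes as a new arc
followed by a walk in `G⁺(Y)`. -/
lemma from_none {Y : Set V} (lam : V → V → ℝ) (lamb : V → ℝ)
    {o₂ : Option V} (p : DWalk (Aplus A Y) none o₂) (u : V)
    (h2 : o₂ = some u) :
    ∃ y ∈ Y, ∃ p' : DWalk (Aplus A Y) (some y) o₂,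
      p.len (lamplus lam lamb) = lamb y + p'.len (lamplus lam lamb) := by
  cases p with
  | nil v => simp at h2
  | @cons u₀ v w h p' =>
      rcases v with _ | y
      · exact absurd h (by simp [Aplus])
      · exact ⟨y, h, p', rfl⟩

end Aux

open Classical in
/-- the sum over `u ∈ U` of `d_{G⁺(Y)}(x₀,u)` decomposes over the
Voronoi cells of the sites `s_y = (y, λ(x₀,y))`, `y ∈ Y`. -/
theorem stmt14 {V : Type*} [Fintype V] (A : V → V → Prop) (lam : V → V → ℝ)
    (hNoNeg : ∀ (v : V) (c : DWalk A v v), 0 ≤ DWalk.len lam c)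
    (Y : Finset V) (lamb : V → ℝ)
    (hcond : ∀ y ∈ Y, ∀ y' ∈ Y, y ≠ y' → lamb y < lamb y' + ddist A lam y' y)
    (hreach : ∀ y ∈ Y, ∀ u : V, Nonempty (DWalk A y u))
    (hgen : ∀ x : V, ∀ y ∈ Y, ∀ y' ∈ Y, y ≠ y' →
      lamb y + ddist A lam y x ≠ lamb y' + ddist A lam y' x)
    (U : Finset V) :
    ∑ u ∈ U, ddist (Aplus A ↑Y) (lamplus lam lamb) none (some u)
      = ∑ y ∈ Y,
          (lamb y * ((U.filter fun u => u ∈ cellY A lam Y lamb y).card : ℝ)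
            + ∑ u ∈ U.filter (fun u => u ∈ cellY A lam Y lamb y),
                ddist A lam y u) := by
  classical
  rcases Y.eq_empty_or_nonempty with rfl | hY
  · rw [Finset.sum_empty]
    apply Finset.sum_eq_zero
    intro u _
    have hempty : {x : ℝ | ∃ p : DWalk (Aplus A (↑(∅ : Finset V)))
        none (some u), DWalk.len (lamplus lam lamb) p = x} = ∅ := by
      ext x
      simp only [Set.mem_setOf_eq, Set.mem_empty_iff_false, iff_false]
      rintro ⟨p, rfl⟩
      obtain ⟨y, hy, -, -⟩ := from_none lam lamb p u rfl
      simp at hy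
    unfold ddist
    rw [hempty, Real.sInf_empty]
  · have hNoNegP := noNeg_plus (Y := (↑Y : Set V)) lam lamb hNoNeg
    have bddP := ddist_bddBelow (Aplus A ↑Y) (lamplus lam lamb)
      (fun o c => hNoNegP o c)
    have bddA := ddist_bddBelow A lam hNoNeg
    -- key identity for each `u`
    have key : ∀ u : V, ddist (Aplus A ↑Y) (lamplus lam lamb) none (some u)
        = Y.inf' hY fun y => lamb y + ddist A lam y u := by
      intro u
      apply le_antisymm
      · obtain ⟨y₀, hy₀, hm⟩ := Finset.exists_mem_eq_inf' hY
          (fun y => lamb y + ddist A lam y u)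
        rw [hm]
        refine le_of_forall_pos_le_add fun ε hε => ?_
        have hne : {x : ℝ | ∃ p : DWalk A y₀ u, DWalk.len lam p = x}.Nonempty :=
          ⟨_, (hreach y₀ hy₀ u).some, rfl⟩
        obtain ⟨x, ⟨p, rfl⟩, hx⟩ := Real.lt_sInf_add_pos hne hε
        obtain ⟨q, hq⟩ := exists_lift (Y := (↑Y : Set V)) lam lamb p
        have harc : Aplus A ↑Y none (some y₀) := Finset.mem_coe.mpr hy₀
        have hD : ddist (Aplus A ↑Y) (lamplus lam lamb) none (some u)
            ≤ DWalk.len (lamplus lam lamb) (.cons harc q) :=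
          csInf_le (bddP none (some u)) ⟨_, rfl⟩
        have hlen : DWalk.len (lamplus lam lamb)
            (DWalk.cons (A := Aplus A ↑Y) harc q) = lamb y₀ + q.len (lamplus lam lamb) := rfl
        rw [hlen, hq] at hD
        have : sInf {x : ℝ | ∃ p : DWalk A y₀ u, DWalk.len lam p = x}
            = ddist A lam y₀ u := rfl
        rw [this] at hx
        linarith
      · apply le_csInf
        · obtain ⟨y₀, hy₀⟩ := hY
          obtain ⟨q, -⟩ := exists_lift (Y := (↑Y : Set V)) lam lamb
            (hreach y₀ hy₀ u).some
          have harc : Aplus A ↑Y none (some y₀) := Finset.mem_coe.mpr hy₀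
          exact ⟨_, DWalk.cons harc q, rfl⟩
        · rintro x ⟨p, rfl⟩
          obtain ⟨y, hy, p', hlen⟩ := from_none lam lamb p u rfl
          obtain ⟨q, hq⟩ := exists_lower lam lamb p' y u rfl rfl
          have h1 : ddist A lam y u ≤ q.len lam := ddist_le_len hNoNeg q
          have h2 : Y.inf' hY (fun y => lamb y + ddist A lam y u)
              ≤ lamb y + ddist A lam y u :=
            Finset.inf'_le _ (Finset.mem_coe.mp hy)
          rw [hlen, ← hq]
          linarith
    -- each `u` lies in exactly one cell, realizing the min
    have uniq : ∀ u : V, ∃ y₀ ∈ Y, u ∈ cellY A lam Y lamb y₀ ∧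
        (∀ y ∈ Y, u ∈ cellY A lam Y lamb y → y = y₀) ∧
        Y.inf' hY (fun y => lamb y + ddist A lam y u)
          = lamb y₀ + ddist A lam y₀ u := by
      intro u
      obtain ⟨y₀, hy₀, hm⟩ := Finset.exists_mem_eq_inf' hY
        (fun y => lamb y + ddist A lam y u)
      have hcell : u ∈ cellY A lam Y lamb y₀ := by
        intro y' hy' _
        exact hm ▸ Finset.inf'_le _ hy'
      refine ⟨y₀, hy₀, hcell, ?_, hm⟩
      intro y hy hcy
      by_contra hne
      have h1 : lamb y + ddist A lam y u ≤ lamb y₀ + ddist A lam y₀ u :=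
        hcy y₀ hy₀ (fun hh => hne hh.symm)
      have h2 : lamb y₀ + ddist A lam y₀ u ≤ lamb y + ddist A lam y u :=
        hcell y hy hne
      exact hgen u y hy y₀ hy₀ hne (le_antisymm h1 h2)
    calc ∑ u ∈ U, ddist (Aplus A ↑Y) (lamplus lam lamb) none (some u)
        = ∑ u ∈ U, ∑ y ∈ Y,
            (if u ∈ cellY A lam Y lamb y then lamb y + ddist A lam y u
             else 0) := by
          refine Finset.sum_congr rfl fun u _ => ?_
          obtain ⟨y₀, hy₀, hc, hu, hm⟩ := uniq u
          rw [key u, hm, Finset.sum_eq_single_of_mem y₀ hy₀]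
          · rw [if_pos hc]
          · intro y hy hne
            rw [if_neg]
            intro hcy
            exact hne (hu y hy hcy)
      _ = ∑ y ∈ Y, ∑ u ∈ U,
            (if u ∈ cellY A lam Y lamb y then lamb y + ddist A lam y u
             else 0) := Finset.sum_comm
      _ = ∑ y ∈ Y, ∑ u ∈ U.filter (fun u => u ∈ cellY A lam Y lamb y),
            (lamb y + ddist A lam y u) := by
          refine Finset.sum_congr rfl fun y _ => ?_
          rw [Finset.sum_filter]
      _ = ∑ y ∈ Y,
          (lamb y * ((U.filter fun u => u ∈ cellY A lam Y lamb y).card : ℝ)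
            + ∑ u ∈ U.filter (fun u => u ∈ cellY A lam Y lamb y),
                ddist A lam y u) := by
          refine Finset.sum_congr rfl fun y _ => ?_
          rw [Finset.sum_add_distrib, Finset.sum_const, nsmul_eq_mul, mul_comm]
end
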